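/- In the standard setup for a finite-dimensional Hopf algebra H over ℂ with positive basis B, for any b ∈ B with α₋(b) = ḡ₋ and β₋(b) = g₋, one has Δ(b) = e_{ḡ₋} ⊗ b + b ⊗ e_{g₋} + terms lying neither in B⊗G₋ nor in G₋⊗B; that is, the only term of Δ(b) lying in G₋⊗B is e_{ḡ₋}⊗b and it occurs with coefficient 1, and the only term of Δ(b) lying in B⊗G₋ is b⊗e_{g₋} and it occurs with coefficient 1. -/

import Mathlib

open scoped TensorProduct ComplexOrder

structure IsPositiveBasis {H : Type*} [Ring H] [HopfAlgebra ℂ H] {ι : Type*}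
    (B : Module.Basis ι ℂ H) : Prop where
  one_nonneg : ∀ i, 0 ≤ B.repr 1 i
  counit_nonneg : ∀ i, 0 ≤ Coalgebra.counit (R := ℂ) (B i)
  mul_nonneg : ∀ i j k, 0 ≤ B.repr (B i * B j) k
  comul_nonneg : ∀ i j k,
    0 ≤ (B.tensorProduct B).repr (Coalgebra.comul (R := ℂ) (B i)) (j, k)
  antipode_nonneg : ∀ i j, 0 ≤ B.repr (HopfAlgebra.antipode (R := ℂ) (B i)) j

/-- The first part of the standard setup: a positive basis `B` of `H`, scaled so that
`1 = ∑_{g₊ ∈ G₊} d_{g₊}` with the `d_{g₊} ∈ B` distinct elements indexed by a finite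
group `G₊`, whose span is the Hopf subalgebra `(ℂ G₊)*`. -/
structure SetupPlus (H : Type*) [Ring H] [HopfAlgebra ℂ H] (ι : Type*) [Fintype ι]
    (Gp : Type*) [Group Gp] [Fintype Gp] where
  B : Module.Basis ι ℂ H
  pos : IsPositiveBasis B
  d : Gp → ι
  d_inj : Function.Injective d
  one_eq : (1 : H) = ∑ g : Gp, B (d g)
  d_mul_self : ∀ g : Gp, B (d g) * B (d g) = B (d g)
  d_mul_ne : ∀ g h : Gp, g ≠ h → B (d g) * B (d h) = 0
  d_comul : ∀ g : Gp, Coalgebra.comul (R := ℂ) (B (d g)) =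
    ∑ h : Gp, B (d h) ⊗ₜ[ℂ] B (d (h⁻¹ * g))
  d_antipode : ∀ g : Gp, HopfAlgebra.antipode (R := ℂ) (B (d g)) = B (d g⁻¹)
  d_counit_one : Coalgebra.counit (R := ℂ) (B (d 1)) = 1
  d_counit_ne : ∀ g : Gp, g ≠ 1 → Coalgebra.counit (R := ℂ) (B (d g)) = 0

/-- The full standard setup: in addition the basis is scaled so that
`ε = ∑_{b ∈ G₋} b*`, where `G₋ = {b ∈ B : ε(b) ≠ 0}` is closed under the
multiplication of `H` and forms a group (with identity `d_e`), whose elements are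
`e_{g₋}` for `g₋` in a finite group `G₋`. -/
structure SetupFull (H : Type*) [Ring H] [HopfAlgebra ℂ H] (ι : Type*) [Fintype ι]
    (Gp : Type*) [Group Gp] [Fintype Gp] (Gn : Type*) [Group Gn] [Fintype Gn] extends
    SetupPlus H ι Gp where
  en : Gn → ι
  en_inj : Function.Injective en
  en_range : ∀ i : ι, Coalgebra.counit (R := ℂ) (B i) ≠ 0 ↔ ∃ x : Gn, en x = i
  en_counit : ∀ x : Gn, Coalgebra.counit (R := ℂ) (B (en x)) = 1
  en_mul : ∀ x y : Gn, B (en x) * B (en y) = B (en (x * y))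
  en_one : en 1 = d 1

section
variable {H : Type*} [Ring H] [HopfAlgebra ℂ H] {ι : Type*} [Fintype ι]
  {Gp : Type*} [Group Gp] [Fintype Gp] {Gn : Type*} [Group Gn] [Fintype Gn]

/-- `α₊(b) = g₊`, i.e. `d_{g₊} b = b`. -/
def IsAlphaPlus (S : SetupPlus H ι Gp) (i : ι) (g : Gp) : Prop :=
  S.B (S.d g) * S.B i = S.B i

/-- `β₊(b) = g₊`, i.e. `b d_{g₊} = b`. -/
def IsBetaPlus (S : SetupPlus H ι Gp) (i : ι) (g : Gp) : Prop :=
  S.B i * S.B (S.d g) = S.B i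

/-- `α₋(b) = g₋`: the only term of `Δ(b)` lying in `G₋ ⊗ B` is `e_{g₋} ⊗ b`,
and it has coefficient `1`. -/
def IsAlphaMinus (S : SetupFull H ι Gp Gn) (i : ι) (x : Gn) : Prop :=
  (S.B.tensorProduct S.B).repr (Coalgebra.comul (R := ℂ) (S.B i)) (S.en x, i) = 1 ∧
  ∀ (y : Gn) (j : ι), ¬(y = x ∧ j = i) →
    (S.B.tensorProduct S.B).repr (Coalgebra.comul (R := ℂ) (S.B i)) (S.en y, j) = 0

/-- `β₋(b) = g₋`: the only term of `Δ(b)` lying in `B ⊗ G₋` is `b ⊗ e_{g₋}`,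
and it has coefficient `1`. -/
def IsBetaMinus (S : SetupFull H ι Gp Gn) (i : ι) (x : Gn) : Prop :=
  (S.B.tensorProduct S.B).repr (Coalgebra.comul (R := ℂ) (S.B i)) (i, S.en x) = 1 ∧
  ∀ (y : Gn) (j : ι), ¬(y = x ∧ j = i) →
    (S.B.tensorProduct S.B).repr (Coalgebra.comul (R := ℂ) (S.B i)) (j, S.en y) = 0

end

/-- The convolution product on the dual `H* = Hom(H, ℂ)` of a Hopf algebra `H`:
`⟨f * g, x⟩ = (f ⊗ g)(Δ x)`.  This is the multiplication of the dual Hopf algebra. -/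
noncomputable def dualMul {H : Type*} [Ring H] [HopfAlgebra ℂ H]
    (f g : Module.Dual ℂ H) : Module.Dual ℂ H :=
  (TensorProduct.dualDistrib ℂ H H (f ⊗ₜ[ℂ] g)) ∘ₗ (Coalgebra.comul (R := ℂ) (A := H))


section Aux
variable {H : Type} [Ring H] [HopfAlgebra ℂ H] {ι : Type} [Fintype ι] [DecidableEq ι]

lemma aux_dual_eval (B : Module.Basis ι ℂ H) (i j k : ι) :
    dualMul (B.dualBasis i) (B.dualBasis j) (B k)
      = (B.tensorProduct B).repr (Coalgebra.comul (R := ℂ) (B k)) (i, j) := by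
  have h := (B.tensorProduct B).sum_repr (Coalgebra.comul (R := ℂ) (B k))
  rw [dualMul, LinearMap.comp_apply]
  conv_lhs => rw [← h]
  rw [map_sum]
  simp [Module.Basis.tensorProduct_apply', TensorProduct.dualDistrib_apply, Module.Basis.dualBasis_apply,
    Module.Basis.repr_self, Finsupp.single_apply]
  rw [Finset.sum_eq_single ((i,j) : ι × ι)]
  · simp
  · rintro ⟨a,b⟩ _ hab
    split_ifs with h1 h2 <;> simp_all
  · simp

lemma aux_counit_left (B : Module.Basis ι ℂ H) (k j : ι) :
    ∑ i : ι, Coalgebra.counit (R := ℂ) (B i) *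
      (B.tensorProduct B).repr (Coalgebra.comul (R := ℂ) (B k)) (i, j)
      = B.repr (B k) j := by
  have h0 := (B.tensorProduct B).sum_repr (Coalgebra.comul (R := ℂ) (B k))
  have h1 : (Coalgebra.counit (R := ℂ)).rTensor H
      (∑ p : ι × ι, (B.tensorProduct B).repr (Coalgebra.comul (R := ℂ) (B k)) p
        • (B.tensorProduct B) p) = (1 : ℂ) ⊗ₜ[ℂ] B k := by
    rw [h0]; exact Coalgebra.rTensor_counit_comul _
  rw [map_sum] at h1
  simp only [Module.Basis.tensorProduct_apply', map_smul, LinearMap.rTensor_tmul] at h1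
  have h2 := congrArg (B.repr ∘ (TensorProduct.lid ℂ H)) h1
  simp only [Function.comp_apply, map_sum, map_smul, TensorProduct.lid_tmul,
    TensorProduct.smul_tmul', smul_eq_mul, mul_one] at h2
  have h3 := congrArg (fun f => f j) h2
  simp only [Finsupp.coe_finset_sum, Finset.sum_apply, Finsupp.coe_smul, Finsupp.smul_apply,
    Pi.smul_apply, smul_eq_mul, Module.Basis.repr_self, Finsupp.single_apply, one_mul] at h3
  simp only [Module.Basis.repr_self, Finsupp.single_apply]
  rw [← h3, Fintype.sum_prod_type]
  congr 1; ext i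
  rw [Finset.sum_eq_single j] <;> simp +contextual [mul_comm]

lemma aux_counit_right (B : Module.Basis ι ℂ H) (k i : ι) :
    ∑ j : ι, Coalgebra.counit (R := ℂ) (B j) *
      (B.tensorProduct B).repr (Coalgebra.comul (R := ℂ) (B k)) (i, j)
      = B.repr (B k) i := by
  have h0 := (B.tensorProduct B).sum_repr (Coalgebra.comul (R := ℂ) (B k))
  have h1 : (Coalgebra.counit (R := ℂ)).lTensor H
      (∑ p : ι × ι, (B.tensorProduct B).repr (Coalgebra.comul (R := ℂ) (B k)) p
        • (B.tensorProduct B) p) = B k ⊗ₜ[ℂ] (1 : ℂ) := by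
    rw [h0]; exact Coalgebra.lTensor_counit_comul _
  rw [map_sum] at h1
  simp only [Module.Basis.tensorProduct_apply', map_smul, LinearMap.lTensor_tmul] at h1
  have h2 := congrArg (B.repr ∘ (TensorProduct.rid ℂ H)) h1
  simp only [Function.comp_apply, map_sum, map_smul, TensorProduct.rid_tmul,
    smul_eq_mul, smul_smul, mul_one] at h2
  have h3 := congrArg (fun f => f i) h2
  simp only [Finsupp.coe_finset_sum, Finset.sum_apply, Finsupp.coe_smul, Finsupp.smul_apply,
    Pi.smul_apply, smul_eq_mul, Module.Basis.repr_self, Finsupp.single_apply, one_mul] at h3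
  simp only [Module.Basis.repr_self, Finsupp.single_apply]
  rw [← h3, Fintype.sum_prod_type_right]
  congr 1; ext j
  rw [Finset.sum_eq_single i] <;> simp +contextual [mul_comm]

end Aux

theorem stmt8 {H : Type} [Ring H] [HopfAlgebra ℂ H] {ι : Type} [Fintype ι]
    [DecidableEq ι] {Gp : Type} [Group Gp] [Fintype Gp] {Gn : Type} [Group Gn]
    [Fintype Gn] (S : SetupFull H ι Gp Gn) (b : ι) (gbar g : Gn)
    -- α₋(b) = ḡ₋, i.e. e_{h₋}* b* = δ_{ḡ₋,h₋} b* in H*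
    (ha : dualMul (S.B.dualBasis (S.en gbar)) (S.B.dualBasis b) = S.B.dualBasis b)
    (ha' : ∀ y : Gn, y ≠ gbar →
      dualMul (S.B.dualBasis (S.en y)) (S.B.dualBasis b) = 0)
    -- β₋(b) = g₋, i.e. b* e_{h₋}* = δ_{g₋,h₋} b* in H*
    (hb : dualMul (S.B.dualBasis b) (S.B.dualBasis (S.en g)) = S.B.dualBasis b)
    (hb' : ∀ y : Gn, y ≠ g →
      dualMul (S.B.dualBasis b) (S.B.dualBasis (S.en y)) = 0) :
    -- Δ(b) = e_{ḡ₋} ⊗ b + b ⊗ e_{g₋} + terms neither in B ⊗ G₋ nor in G₋ ⊗ B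
    ((S.B.tensorProduct S.B).repr (Coalgebra.comul (R := ℂ) (S.B b)) (S.en gbar, b) = 1) ∧
    (∀ (y : Gn) (j : ι), ¬(y = gbar ∧ j = b) →
      (S.B.tensorProduct S.B).repr (Coalgebra.comul (R := ℂ) (S.B b)) (S.en y, j) = 0) ∧
    ((S.B.tensorProduct S.B).repr (Coalgebra.comul (R := ℂ) (S.B b)) (b, S.en g) = 1) ∧
    (∀ (y : Gn) (j : ι), ¬(y = g ∧ j = b) →
      (S.B.tensorProduct S.B).repr (Coalgebra.comul (R := ℂ) (S.B b)) (j, S.en y) = 0) := by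
  classical
  have key1 : (S.B.tensorProduct S.B).repr (Coalgebra.comul (R := ℂ) (S.B b))
      (S.en gbar, b) = 1 := by
    have := congrArg (fun f : Module.Dual ℂ H => f (S.B b)) ha
    simp only [aux_dual_eval] at this
    simpa [Module.Basis.dualBasis_apply, Module.Basis.repr_self] using this
  have key3 : (S.B.tensorProduct S.B).repr (Coalgebra.comul (R := ℂ) (S.B b))
      (b, S.en g) = 1 := by
    have := congrArg (fun f : Module.Dual ℂ H => f (S.B b)) hb
    simp only [aux_dual_eval] at this
    simpa [Module.Basis.dualBasis_apply, Module.Basis.repr_self] using this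
  refine ⟨key1, ?_, key3, ?_⟩
  · intro y j hyj
    by_cases hj : j = b
    · subst hj
      have hy : y ≠ gbar := by rintro rfl; exact hyj ⟨rfl, rfl⟩
      have := congrArg (fun f : Module.Dual ℂ H => f (S.B j)) (ha' y hy)
      simp only [aux_dual_eval] at this
      simpa using this
    · have hsum := aux_counit_left S.B b j
      rw [Module.Basis.repr_self, Finsupp.single_apply, if_neg (fun h => hj h.symm)] at hsum
      have hterm : ∀ i ∈ Finset.univ, (0:ℂ) ≤ Coalgebra.counit (R := ℂ) (S.B i) *
          (S.B.tensorProduct S.B).repr (Coalgebra.comul (R := ℂ) (S.B b)) (i, j) :=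
        fun i _ => mul_nonneg (S.pos.counit_nonneg i) (S.pos.comul_nonneg b i j)
      have hz := (Finset.sum_eq_zero_iff_of_nonneg hterm).mp hsum (S.en y) (Finset.mem_univ _)
      rw [S.en_counit y, one_mul] at hz
      exact hz
  · intro y j hyj
    by_cases hj : j = b
    · subst hj
      have hy : y ≠ g := by rintro rfl; exact hyj ⟨rfl, rfl⟩
      have := congrArg (fun f : Module.Dual ℂ H => f (S.B j)) (hb' y hy)
      simp only [aux_dual_eval] at this
      simpa using this
    · have hsum := aux_counit_right S.B b j
      rw [Module.Basis.repr_self, Finsupp.single_apply, if_neg (fun h => hj h.symm)] at hsum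
      have hterm : ∀ i ∈ Finset.univ, (0:ℂ) ≤ Coalgebra.counit (R := ℂ) (S.B i) *
          (S.B.tensorProduct S.B).repr (Coalgebra.comul (R := ℂ) (S.B b)) (j, i) :=
        fun i _ => mul_nonneg (S.pos.counit_nonneg i) (S.pos.comul_nonneg b j i)
      have hz := (Finset.sum_eq_zero_iff_of_nonneg hterm).mp hsum (S.en y) (Finset.mem_univ _)
      rw [S.en_counit y, one_mul] at hz
      exact hz
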